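/- Let x ∈ {0,1}^m and y ∈ {0,1}^n be binary strings with x[1] ≠ y[1], let a = lor(x,1) and b = lor(y,1) be the lengths of their first runs, and let m' = #runs(x) ≥ n' = #runs(y). If m' = n' = 1 then d_DTW(x,y) = max(a,b); if m' > n' = 1 then d_DTW(x,y) = a + d_DTW(x[a+1,m], y); and if n' > 1 then d_DTW(x,y) = min(a + d_DTW(x[a+1,m], y), b + d_DTW(x, y[b+1,n])). -/

import Mathlib

/-- `IsExpansion x x'` : `x'` is obtained from `x` by duplicating each character an
arbitrary positive number of times. -/
def IsExpansion (x x' : List ℝ) : Prop :=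
  ∃ ks : List ℕ, ks.length = x.length ∧ (∀ k ∈ ks, 0 < k) ∧
    x' = (List.zipWith (fun k (a : ℝ) => List.replicate k a) ks x).flatten

/-- The dynamic time warping distance with `ℓ₁` character cost `|a - b|`:
the minimum over all pairs of equal-length expansions of the `ℓ₁` distance. -/
noncomputable def dtw (x y : List ℝ) : ℝ :=
  sInf { c | ∃ x' y', IsExpansion x x' ∧ IsExpansion y y' ∧ x'.length = y'.length ∧
    c = (List.zipWith (fun a b => |a - b|) x' y').sum }

open Classical in
/-- The number of runs (maximal blocks of equal characters) of a sequence. -/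
noncomputable def numRuns (l : List ℝ) : ℕ := (l.destutter (· ≠ ·)).length

open Classical in
/-- The length of the first run of a sequence. -/
noncomputable def firstRunLen (l : List ℝ) : ℕ :=
  (l.takeWhile (fun a => decide (a = l.headD 0))).length

namespace DTWAux


lemma flatten_zipWith_one : ∀ l : List ℝ,
    (List.zipWith (fun k (a : ℝ) => List.replicate k a) (List.replicate l.length 1) l).flatten = l
  | [] => rfl
  | a :: t => by
    simp only [List.length_cons, List.replicate_succ, List.zipWith_cons_cons,
      List.flatten_cons, List.replicate_one, flatten_zipWith_one t]
    rfl

lemma exp_refl (l : List ℝ) : IsExpansion l l :=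
  ⟨List.replicate l.length 1, by simp, by simp, (flatten_zipWith_one l).symm⟩

lemma exp_length_le_aux : ∀ (ks : List ℕ) (x : List ℝ), ks.length = x.length →
    (∀ k ∈ ks, 0 < k) →
    x.length ≤ ((List.zipWith (fun k (a : ℝ) => List.replicate k a) ks x).flatten).length
  | [], [], _, _ => by simp
  | [], _ :: _, h, _ => by simp at h
  | _ :: _, [], h, _ => by simp at h
  | k :: ks, a :: x, h, hpos => by
    simp only [List.zipWith_cons_cons, List.flatten_cons, List.length_append,
      List.length_replicate, List.length_cons]
    have h1 := exp_length_le_aux ks x (by simpa using h) (fun k hk => hpos _ (List.mem_cons_of_mem _ hk))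
    have h2 : 0 < k := hpos k (List.mem_cons_self)
    omega

lemma exp_length_le {x x' : List ℝ} (h : IsExpansion x x') : x.length ≤ x'.length := by
  obtain ⟨ks, h1, h2, rfl⟩ := h
  exact exp_length_le_aux ks x h1 h2

lemma exp_subset_aux : ∀ (ks : List ℕ) (x : List ℝ),
    ((List.zipWith (fun k (a : ℝ) => List.replicate k a) ks x).flatten) ⊆ x
  | [], _ => by simp
  | _ :: _, [] => by simp
  | k :: ks, a :: x => by
    simp only [List.zipWith_cons_cons, List.flatten_cons]
    intro z hz
    rcases List.mem_append.1 hz with h | h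
    · exact (List.eq_of_mem_replicate h) ▸ List.mem_cons_self
    · exact List.mem_cons_of_mem _ (exp_subset_aux ks x h)

lemma exp_subset {x x' : List ℝ} (h : IsExpansion x x') : x' ⊆ x := by
  obtain ⟨ks, h1, h2, rfl⟩ := h
  exact exp_subset_aux ks x

lemma exp_nil_right {x : List ℝ} (h : IsExpansion x []) : x = [] := by
  have := exp_length_le h
  simpa using List.eq_nil_of_length_eq_zero (by simpa using this)

lemma exp_nil_left {x' : List ℝ} (h : IsExpansion [] x') : x' = [] := by
  obtain ⟨ks, h1, h2, rfl⟩ := h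
  simp [List.eq_nil_of_length_eq_zero h1]

lemma exp_append {s t p q : List ℝ} (hs : IsExpansion s p) (ht : IsExpansion t q) :
    IsExpansion (s ++ t) (p ++ q) := by
  obtain ⟨ks₁, h1, h2, rfl⟩ := hs
  obtain ⟨ks₂, g1, g2, rfl⟩ := ht
  refine ⟨ks₁ ++ ks₂, by simp [h1, g1], ?_, ?_⟩
  · intro k hk; rcases List.mem_append.1 hk with h | h
    · exact h2 k h
    · exact g2 k h
  · rw [List.zipWith_append (by omega), List.flatten_append]

lemma exp_split {s t z : List ℝ} (h : IsExpansion (s ++ t) z) :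
    ∃ p q, IsExpansion s p ∧ IsExpansion t q ∧ z = p ++ q := by
  obtain ⟨ks, h1, h2, rfl⟩ := h
  refine ⟨(List.zipWith (fun k (a : ℝ) => List.replicate k a) (ks.take s.length) s).flatten,
    (List.zipWith (fun k (a : ℝ) => List.replicate k a) (ks.drop s.length) t).flatten,
    ⟨ks.take s.length, ?_, fun k hk => h2 k (List.mem_of_mem_take hk), rfl⟩,
    ⟨ks.drop s.length, ?_, fun k hk => h2 k (List.mem_of_mem_drop hk), rfl⟩, ?_⟩
  · simp at h1 ⊢; omega
  · simp at h1 ⊢; omega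
  · conv_lhs => rw [← List.take_append_drop s.length ks]
    rw [List.zipWith_append (by simp at h1 ⊢; omega), List.flatten_append]

lemma exp_cons_head {l p : List ℝ} (h : IsExpansion l p) (hl : l ≠ []) (k : ℕ) :
    IsExpansion l (List.replicate k (l.headD 0) ++ p) := by
  obtain ⟨h0, t, rfl⟩ := List.exists_cons_of_ne_nil hl
  obtain ⟨ks, h1, h2, rfl⟩ := h
  obtain ⟨k1, ks', rfl⟩ := List.exists_cons_of_ne_nil (l := ks)
    (by intro hh; subst hh; simp at h1)
  refine ⟨(k1 + k) :: ks', by simpa using h1, ?_, ?_⟩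
  · intro j hj
    rcases List.mem_cons.1 hj with rfl | hj
    · have := h2 k1 (List.mem_cons_self); omega
    · exact h2 j (List.mem_cons_of_mem _ hj)
  · simp only [List.zipWith_cons_cons, List.flatten_cons, List.headD_cons]
    rw [Nat.add_comm k1 k, List.replicate_add, List.append_assoc]



lemma exp_replicate_of {n : ℕ} {c : ℝ} {z : List ℝ} (h : IsExpansion (List.replicate n c) z) :
    ∃ N, n ≤ N ∧ z = List.replicate N c := by
  refine ⟨z.length, by simpa using exp_length_le h, ?_⟩
  exact List.eq_replicate_length.2 fun b hb => List.eq_of_mem_replicate (exp_subset h hb)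

lemma exp_replicate {n N : ℕ} {c : ℝ} (hn : 1 ≤ n) (hN : n ≤ N) :
    IsExpansion (List.replicate n c) (List.replicate N c) := by
  induction N, hN using Nat.le_induction with
  | base => exact exp_refl _
  | succ N hN ih =>
    have h1 : (List.replicate n c : List ℝ) ≠ [] := by
      intro hh
      have := congrArg List.length hh
      simp at this; omega
    have h2 : (List.replicate n c : List ℝ).headD 0 = c := by
      obtain ⟨m, rfl⟩ : ∃ m, n = m + 1 := ⟨n - 1, by omega⟩
      simp [List.replicate_succ]
    have := exp_cons_head ih h1 1
    rw [h2] at this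
    simpa [List.replicate_succ] using this

lemma exp_replicate' {n N : ℕ} {c : ℝ} (hN : n ≤ N) (h0 : n = 0 → N = 0) :
    IsExpansion (List.replicate n c) (List.replicate N c) := by
  rcases Nat.eq_zero_or_pos n with rfl | hn
  · rw [h0 rfl]; exact exp_refl _
  · exact exp_replicate hn hN

def lcost (p q : List ℝ) : ℝ := (List.zipWith (fun a b => |a - b|) p q).sum

def Costs (x y : List ℝ) : Set ℝ :=
  { c | ∃ x' y', IsExpansion x x' ∧ IsExpansion y y' ∧ x'.length = y'.length ∧
    c = (List.zipWith (fun a b => |a - b|) x' y').sum }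

lemma dtw_def (x y : List ℝ) : dtw x y = sInf (Costs x y) := rfl

lemma mem_costs {C : ℝ} {x y : List ℝ} : C ∈ Costs x y ↔
    ∃ p q, IsExpansion x p ∧ IsExpansion y q ∧ p.length = q.length ∧ C = lcost p q :=
  Iff.rfl

lemma lcost_nonneg : ∀ (p q : List ℝ), 0 ≤ lcost p q
  | [], _ => by simp [lcost]
  | _ :: _, [] => by simp [lcost]
  | a :: p, b :: q => by
    simp only [lcost, List.zipWith_cons_cons, List.sum_cons]
    have := lcost_nonneg p q
    have := abs_nonneg (a - b)
    simp only [lcost] at *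
    linarith

lemma costs_bddBelow (x y : List ℝ) : BddBelow (Costs x y) := by
  refine ⟨0, fun C hC => ?_⟩
  obtain ⟨p, q, _, _, _, rfl⟩ := mem_costs.1 hC
  exact lcost_nonneg p q

lemma lcost_append {p₁ q₁ : List ℝ} (p₂ q₂ : List ℝ) (h : p₁.length = q₁.length) :
    lcost (p₁ ++ p₂) (q₁ ++ q₂) = lcost p₁ q₁ + lcost p₂ q₂ := by
  simp only [lcost]
  rw [List.zipWith_append h, List.sum_append]

lemma lcost_replicate (n : ℕ) (c d : ℝ) :
    lcost (List.replicate n c) (List.replicate n d) = n * |c - d| := by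
  simp [lcost, List.zipWith_replicate, List.sum_replicate]

lemma lcost_comm : ∀ (p q : List ℝ), lcost p q = lcost q p
  | [], q => by cases q <;> simp [lcost]
  | _ :: _, [] => by simp [lcost]
  | a :: p, b :: q => by
    simp only [lcost, List.zipWith_cons_cons, List.sum_cons]
    have := lcost_comm p q
    simp only [lcost] at this
    rw [this, abs_sub_comm]

lemma costs_comm (x y : List ℝ) : Costs x y = Costs y x := by
  ext C
  constructor <;> rintro ⟨p, q, hp, hq, hl, rfl⟩
  · exact ⟨q, p, hq, hp, hl.symm, lcost_comm p q⟩
  · exact ⟨q, p, hq, hp, hl.symm, lcost_comm p q⟩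

lemma dtw_comm (x y : List ℝ) : dtw x y = dtw y x := by
  rw [dtw_def, dtw_def, costs_comm]

lemma zipWith_replicate_left (n : ℕ) : ∀ (l : List ℝ),
    List.zipWith (fun k (a : ℝ) => List.replicate k a) (List.replicate l.length n) l
      = l.map (List.replicate n)
  | [] => rfl
  | a :: t => by
    simp only [List.length_cons, List.replicate_succ, List.zipWith_cons_cons, List.map_cons,
      zipWith_replicate_left n t]

lemma exp_uniform {n : ℕ} (hn : 1 ≤ n) (x : List ℝ) :
    IsExpansion x ((x.map (List.replicate n)).flatten) :=
  ⟨List.replicate x.length n, by simp, by intro k hk; rw [List.eq_of_mem_replicate hk]; omega,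
    by rw [zipWith_replicate_left]⟩

lemma costs_nonempty {x y : List ℝ} (hx : x ≠ []) (hy : y ≠ []) : (Costs x y).Nonempty := by
  have hxl : 1 ≤ x.length := List.length_pos_iff.2 hx
  have hyl : 1 ≤ y.length := List.length_pos_iff.2 hy
  refine ⟨_, mem_costs.2 ⟨(x.map (List.replicate y.length)).flatten,
    (y.map (List.replicate x.length)).flatten, exp_uniform hyl x, exp_uniform hxl y, ?_, rfl⟩⟩
  simp only [List.length_flatten, List.map_map]
  simp [Function.comp_def, Nat.mul_comm]



/-- M1: prepending copies of `u`'s head character to the other string is free. -/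
lemma dtw_prepend_head_le {u z : List ℝ} {d : ℝ} (hu : u ≠ []) (hz : z ≠ [])
    (hud : u.headD 0 = d) (k : ℕ) :
    dtw u (List.replicate k d ++ z) ≤ dtw u z := by
  rw [dtw_def, dtw_def]
  refine csInf_le_csInf (costs_bddBelow _ _) (costs_nonempty hu hz) ?_
  rintro C hC
  obtain ⟨p, q, hp, hq, hl, rfl⟩ := mem_costs.1 hC
  refine mem_costs.2 ⟨List.replicate k d ++ p, List.replicate k d ++ q, ?_, ?_, by simp [hl], ?_⟩
  · have := exp_cons_head hp hu k; rwa [hud] at this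
  · exact exp_append (exp_refl _) hq
  · rw [lcost_append _ _ (by simp), lcost_replicate]
    simp

/-- Upper bound: `dtw (c^a ++ u) w ≤ a + dtw u w` when `w` starts with `d`, `|c-d|=1`. -/
lemma dtw_run_prepend {c d : ℝ} {a : ℕ} {u w : List ℝ} (hcd : |c - d| = 1) (ha : 1 ≤ a)
    (hu : u ≠ []) (hw : w ≠ []) (hwd : w.headD 0 = d) :
    dtw (List.replicate a c ++ u) w ≤ (a : ℝ) + dtw u w := by
  have key : ∀ C ∈ Costs u w, dtw (List.replicate a c ++ u) w ≤ (a : ℝ) + C := by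
    rintro C hC
    obtain ⟨p, q, hp, hq, hl, rfl⟩ := mem_costs.1 hC
    rw [dtw_def]
    have hmem : (a : ℝ) + lcost p q ∈ Costs (List.replicate a c ++ u) w := by
      refine mem_costs.2 ⟨List.replicate a c ++ p, List.replicate a d ++ q, ?_, ?_,
        by simp [hl], ?_⟩
      · exact exp_append (exp_refl _) hp
      · have := exp_cons_head hq hw a; rwa [hwd] at this
      · rw [lcost_append _ _ (by simp), lcost_replicate, hcd, mul_one]
    exact csInf_le (costs_bddBelow _ _) hmem
  have h2 : dtw (List.replicate a c ++ u) w - a ≤ sInf (Costs u w) :=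
    le_csInf (costs_nonempty hu hw) fun C hC => by linarith [key C hC]
  rw [dtw_def u w]
  linarith

/-- Core lower-bound computation, for the case `A ≤ B`. -/
lemma core {c d : ℝ} {a b A B : ℕ} {u v u' v' : List ℝ}
    (hcd : |c - d| = 1) (ha : 1 ≤ a) (hb : 1 ≤ b) (haA : a ≤ A)
    (hu : u ≠ []) (hud : u.headD 0 = d)
    (hu' : IsExpansion u u') (hv' : IsExpansion v v')
    (hAB : A ≤ B) (hlen : A + u'.length = B + v'.length) :
    (a : ℝ) + dtw u (List.replicate b d ++ v)
      ≤ lcost (List.replicate A c ++ u') (List.replicate B d ++ v') := by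
  set j := min (B - A) b with hj
  have hsplit : lcost (List.replicate A c ++ u') (List.replicate B d ++ v')
      = (A : ℝ) * |c - d| + lcost u' (List.replicate (B - A) d ++ v') := by
    conv_lhs => rw [show (List.replicate B d : List ℝ)
      = List.replicate A d ++ List.replicate (B - A) d by
        rw [← List.replicate_add]; congr 1; omega]
    rw [List.append_assoc, lcost_append _ _ (by simp), lcost_replicate]
  have hw' : IsExpansion (List.replicate j d ++ v) (List.replicate (B - A) d ++ v') :=
    exp_append (exp_replicate' (min_le_left _ _) (by omega)) hv'
  have huu : 1 ≤ u.length := List.length_pos_iff.2 hu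
  have huu' : 1 ≤ u'.length := le_trans huu (exp_length_le hu')
  have hulen : u'.length = (List.replicate (B - A) d ++ v').length := by simp; omega
  have h1 : dtw u (List.replicate j d ++ v) ≤ lcost u' (List.replicate (B - A) d ++ v') := by
    rw [dtw_def]
    exact csInf_le (costs_bddBelow _ _) (mem_costs.2 ⟨u', _, hu', hw', hulen, rfl⟩)
  have hjv : List.replicate j d ++ v ≠ [] := by
    by_cases hv : v = []
    · subst hv
      have hv'0 : v' = [] := exp_nil_left hv'
      subst hv'0
      simp only [List.length_nil] at hlen
      have hj1 : 1 ≤ j := by omega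
      simp only [List.append_nil]
      intro hh
      have := congrArg List.length hh
      simp at this; omega
    · simp [hv]
  have h2 : dtw u (List.replicate b d ++ v) ≤ dtw u (List.replicate j d ++ v) := by
    have hrw : (List.replicate b d : List ℝ) ++ v
        = List.replicate (b - j) d ++ (List.replicate j d ++ v) := by
      rw [← List.append_assoc, ← List.replicate_add]
      congr 2
      omega
    rw [hrw]
    exact dtw_prepend_head_le hu hjv hud _
  rw [hsplit, hcd, mul_one]
  have haA' : (a : ℝ) ≤ A := Nat.cast_le.2 haA
  linarith [h2.trans h1]

/-- Main per-element lower bound. -/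
lemma lower {c d : ℝ} {a b : ℕ} {u v : List ℝ}
    (hcd : |c - d| = 1) (ha : 1 ≤ a) (hb : 1 ≤ b)
    (hud : u ≠ [] → u.headD 0 = d) (hvc : v ≠ [] → v.headD 0 = c)
    {C : ℝ} (hC : C ∈ Costs (List.replicate a c ++ u) (List.replicate b d ++ v)) :
    (u = [] → v = [] → max (a : ℝ) (b : ℝ) ≤ C) ∧
    (u ≠ [] → ((a : ℝ) + dtw u (List.replicate b d ++ v) ≤ C ∨
      (v ≠ [] ∧ (b : ℝ) + dtw (List.replicate a c ++ u) v ≤ C))) := by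
  obtain ⟨x', y', hx', hy', hlen, rfl⟩ := mem_costs.1 hC
  obtain ⟨p, u', hp, hu', rfl⟩ := exp_split hx'
  obtain ⟨A, haA, rfl⟩ := exp_replicate_of hp
  obtain ⟨q, v', hq, hv', rfl⟩ := exp_split hy'
  obtain ⟨B, hbB, rfl⟩ := exp_replicate_of hq
  simp only [List.length_append, List.length_replicate] at hlen
  constructor
  · rintro rfl rfl
    have hu0 : u' = [] := exp_nil_left hu'
    have hv0 : v' = [] := exp_nil_left hv'
    subst hu0; subst hv0
    simp only [List.length_nil] at hlen
    have hAB : A = B := by omega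
    subst hAB
    simp only [List.append_nil]
    rw [lcost_replicate, hcd, mul_one]
    have : (a : ℝ) ≤ A := Nat.cast_le.2 haA
    have : (b : ℝ) ≤ A := Nat.cast_le.2 hbB
    exact max_le ‹(a : ℝ) ≤ A› ‹(b : ℝ) ≤ A›
  · intro hu0
    rcases le_or_gt A B with hAB | hBA
    · exact Or.inl (core hcd ha hb haA hu0 (hud hu0) hu' hv' hAB hlen)
    · right
      have hv0 : v ≠ [] := by
        intro hvnil
        subst hvnil
        have : v' = [] := exp_nil_left hv'
        subst this
        simp only [List.length_nil] at hlen
        omega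
      refine ⟨hv0, ?_⟩
      have hcore := core (c := d) (d := c) (by rwa [abs_sub_comm]) hb ha hbB hv0 (hvc hv0)
        hv' hu' (le_of_lt hBA) (by omega)
      rw [lcost_comm]
      rw [dtw_comm]
      exact hcore

/-- Case 1: both strings are single runs. -/
lemma case1 {c d : ℝ} {a b : ℕ} (hcd : |c - d| = 1) (ha : 1 ≤ a) (hb : 1 ≤ b) :
    dtw (List.replicate a c) (List.replicate b d) = ((max a b : ℕ) : ℝ) := by
  have hxne : (List.replicate a c : List ℝ) ≠ [] := by
    intro hh; have := congrArg List.length hh; simp at this; omega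
  have hyne : (List.replicate b d : List ℝ) ≠ [] := by
    intro hh; have := congrArg List.length hh; simp at this; omega
  rw [dtw_def]
  refine le_antisymm ?_ ?_
  · refine csInf_le (costs_bddBelow _ _) (mem_costs.2 ⟨List.replicate (max a b) c,
      List.replicate (max a b) d, exp_replicate ha (le_max_left _ _),
      exp_replicate hb (le_max_right _ _), by simp, ?_⟩)
    rw [lcost_replicate, hcd, mul_one]
  · refine le_csInf (costs_nonempty hxne hyne) ?_
    rintro C hC
    obtain ⟨p, q, hp, hq, hl, rfl⟩ := mem_costs.1 hC
    obtain ⟨A, haA, rfl⟩ := exp_replicate_of hp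
    obtain ⟨B, hbB, rfl⟩ := exp_replicate_of hq
    simp only [List.length_replicate] at hl
    subst hl
    rw [lcost_replicate, hcd, mul_one]
    have h1 : max a b ≤ A := max_le haA hbB
    exact_mod_cast h1



lemma head_dropWhile_not (p : ℝ → Bool) :
    ∀ (l : List ℝ), l.dropWhile p ≠ [] → ¬ p ((l.dropWhile p).headD 0)
  | [], h => by simp at h
  | a :: t, h => by
    by_cases hpa : p a
    · rw [List.dropWhile_cons_of_pos hpa] at h ⊢
      exact head_dropWhile_not p t h
    · rw [List.dropWhile_cons_of_neg hpa] at h ⊢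
      simpa using hpa

open Classical in
lemma destutter'_ne (h : ℝ) : ∀ (t : List ℝ),
    List.destutter' (· ≠ ·) h t
      = h :: List.destutter (· ≠ ·) (t.dropWhile (fun a => decide (a = h)))
  | [] => by simp [List.destutter']
  | b :: r => by
    rw [List.destutter'_cons]
    by_cases hbh : b = h
    · rw [if_neg (by simp [hbh]), destutter'_ne h r,
        List.dropWhile_cons_of_pos (by simp [hbh])]
    · rw [if_pos (Ne.symm hbh), List.dropWhile_cons_of_neg (by simp [hbh]),
        ← List.destutter_cons']

open Classical in
lemma run_structure {l : List ℝ} (hl : l ≠ []) :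
    1 ≤ firstRunLen l ∧
    l = List.replicate (firstRunLen l) (l.headD 0) ++ l.drop (firstRunLen l) ∧
    (l.drop (firstRunLen l) ≠ [] → (l.drop (firstRunLen l)).headD 0 ≠ l.headD 0) ∧
    numRuns l = 1 + numRuns (l.drop (firstRunLen l)) := by
  obtain ⟨h, t, rfl⟩ := List.exists_cons_of_ne_nil hl
  have hfr : firstRunLen (h :: t)
      = ((h :: t).takeWhile (fun a => decide (a = (h :: t).headD 0))).length := rfl
  have htake : (h :: t).takeWhile (fun a => decide (a = (h :: t).headD 0))
      = List.replicate (firstRunLen (h :: t)) ((h :: t).headD 0) := by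
    rw [hfr]
    refine List.eq_replicate_length.2 fun b hb => ?_
    have := List.mem_takeWhile_imp hb
    simpa using this
  have hdrop : (h :: t).drop (firstRunLen (h :: t))
      = (h :: t).dropWhile (fun a => decide (a = (h :: t).headD 0)) := by
    rw [hfr]
    have := List.drop_left (l₁ := (h :: t).takeWhile (fun a => decide (a = (h :: t).headD 0)))
      (l₂ := (h :: t).dropWhile (fun a => decide (a = (h :: t).headD 0)))
    rwa [List.takeWhile_append_dropWhile] at this
  have hfr1 : 1 ≤ firstRunLen (h :: t) := by
    rw [hfr, List.takeWhile_cons, if_pos (by simp)]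
    simp
  refine ⟨hfr1, ?_, ?_, ?_⟩
  · conv_lhs => rw [← List.takeWhile_append_dropWhile
      (p := fun a => decide (a = (h :: t).headD 0)) (l := h :: t)]
    rw [htake, hdrop]
  · intro hne hcontra
    rw [hdrop] at hne hcontra
    have := head_dropWhile_not (fun a => decide (a = (h :: t).headD 0)) (h :: t) hne
    rw [hcontra] at this
    simp at this
  · rw [hdrop]
    show (List.destutter (· ≠ ·) (h :: t)).length = _
    rw [List.destutter_cons', destutter'_ne]
    have h2 : (h :: t).dropWhile (fun a => decide (a = (h :: t).headD 0))
        = t.dropWhile (fun a => decide (a = h)) := by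
      rw [List.dropWhile_cons_of_pos (by simp)]
      rfl
    rw [h2]
    simp [numRuns]
    omega


lemma numRuns_nil : numRuns ([] : List ℝ) = 0 := rfl

lemma numRuns_pos {l : List ℝ} (hl : l ≠ []) : 1 ≤ numRuns l := by
  obtain ⟨-, -, -, h4⟩ := run_structure hl
  omega

end DTWAux

/-- Let `x, y` be binary strings with `x[1] ≠ y[1]`, first-run lengths
`a = lor(x,1)` and `b = lor(y,1)`, and `m' = #runs(x) ≥ n' = #runs(y)`.  Then:
if `m' = n' = 1` then `d_DTW(x,y) = max(a,b)`;
if `m' > n' = 1` then `d_DTW(x,y) = a + d_DTW(x[a+1,m], y)`;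
if `n' > 1` then `d_DTW(x,y) = min(a + d_DTW(x[a+1,m], y), b + d_DTW(x, y[b+1,n]))`. -/
theorem dtw_first_run_recursion
    (x y : List ℝ) (hx : x ≠ []) (hy : y ≠ [])
    (hxbin : ∀ c ∈ x, c = 0 ∨ c = 1) (hybin : ∀ c ∈ y, c = 0 ∨ c = 1)
    (hhead : x.headD 0 ≠ y.headD 0)
    (hruns : numRuns y ≤ numRuns x) :
    (numRuns x = 1 → numRuns y = 1 →
      dtw x y = max (firstRunLen x : ℝ) (firstRunLen y : ℝ)) ∧
    (1 < numRuns x → numRuns y = 1 →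
      dtw x y = (firstRunLen x : ℝ) + dtw (x.drop (firstRunLen x)) y) ∧
    (1 < numRuns y →
      dtw x y = min ((firstRunLen x : ℝ) + dtw (x.drop (firstRunLen x)) y)
        ((firstRunLen y : ℝ) + dtw x (y.drop (firstRunLen y)))) := by
  obtain ⟨ha1, hxr, hxh, hnx⟩ := DTWAux.run_structure hx
  obtain ⟨hb1, hyr, hyh, hny⟩ := DTWAux.run_structure hy
  set c := x.headD 0 with hc
  set d := y.headD 0 with hd
  set a := firstRunLen x with ha
  set b := firstRunLen y with hb
  set u := x.drop a with hu
  set v := y.drop b with hv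
  have hcx : c = 0 ∨ c = 1 := by
    obtain ⟨h0, t0, hxe⟩ := List.exists_cons_of_ne_nil hx
    have : c = h0 := by rw [hc, hxe]; rfl
    exact this ▸ hxbin h0 (hxe ▸ List.mem_cons_self)
  have hdy : d = 0 ∨ d = 1 := by
    obtain ⟨h0, t0, hye⟩ := List.exists_cons_of_ne_nil hy
    have : d = h0 := by rw [hd, hye]; rfl
    exact this ▸ hybin h0 (hye ▸ List.mem_cons_self)
  have hne_cd : c ≠ d := hhead
  have hcd : |c - d| = 1 := by
    rcases hcx with h1 | h1 <;> rcases hdy with h2 | h2 <;>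
      first
        | (exact absurd (h1.trans h2.symm) hne_cd)
        | (rw [h1, h2]; norm_num)
  have hud : u ≠ [] → u.headD 0 = d := by
    intro hne
    obtain ⟨z, r, hzr⟩ := List.exists_cons_of_ne_nil hne
    have hz01 : z = 0 ∨ z = 1 := by
      refine hxbin z (List.mem_of_mem_drop (i := a) ?_)
      rw [← hu]
      exact hzr ▸ List.mem_cons_self
    have hz_ne : z ≠ c := by
      have := hxh hne
      rwa [hzr] at this
    rw [hzr]
    show z = d
    rcases hcx with h1 | h1 <;> rcases hdy with h2 | h2
    · exact absurd (h1.trans h2.symm) hne_cd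
    · rcases hz01 with rfl | rfl
      · exact absurd h1.symm hz_ne
      · exact h2.symm
    · rcases hz01 with rfl | rfl
      · exact h2.symm
      · exact absurd h1.symm hz_ne
    · exact absurd (h1.trans h2.symm) hne_cd
  have hvc : v ≠ [] → v.headD 0 = c := by
    intro hne
    obtain ⟨z, r, hzr⟩ := List.exists_cons_of_ne_nil hne
    have hz01 : z = 0 ∨ z = 1 := by
      refine hybin z (List.mem_of_mem_drop (i := b) ?_)
      rw [← hv]
      exact hzr ▸ List.mem_cons_self
    have hz_ne : z ≠ d := by
      have := hyh hne
      rwa [hzr] at this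
    rw [hzr]
    show z = c
    rcases hcx with h1 | h1 <;> rcases hdy with h2 | h2
    · exact absurd (h1.trans h2.symm) hne_cd
    · rcases hz01 with rfl | rfl
      · exact h1.symm
      · exact absurd h2.symm hz_ne
    · rcases hz01 with rfl | rfl
      · exact absurd h2.symm hz_ne
      · exact h1.symm
    · exact absurd (h1.trans h2.symm) hne_cd
  have hxu : numRuns x = 1 ↔ u = [] := by
    constructor
    · intro h1
      by_contra hne
      have := DTWAux.numRuns_pos hne
      omega
    · intro h1
      rw [hnx, h1, DTWAux.numRuns_nil]
  have hyv : numRuns y = 1 ↔ v = [] := by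
    constructor
    · intro h1
      by_contra hne
      have := DTWAux.numRuns_pos hne
      omega
    · intro h1
      rw [hny, h1, DTWAux.numRuns_nil]
  refine ⟨?_, ?_, ?_⟩
  · intro h1 h2
    have hu0 : u = [] := hxu.1 h1
    have hv0 : v = [] := hyv.1 h2
    have : dtw x y = dtw (List.replicate a c) (List.replicate b d) := by
      conv_lhs => rw [hxr, hyr, hu0, hv0, List.append_nil, List.append_nil]
    rw [this, DTWAux.case1 hcd ha1 hb1, Nat.cast_max]
  · intro hx2 hy1
    have hu0 : u ≠ [] := fun h => by have := hxu.2 h; omega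
    have hv0 : v = [] := hyv.1 hy1
    refine le_antisymm ?_ ?_
    · have hle := DTWAux.dtw_run_prepend hcd ha1 hu0 hy hd.symm
      calc dtw x y = dtw (List.replicate a c ++ u) y := by conv_lhs => rw [hxr]
        _ ≤ _ := hle
    · rw [DTWAux.dtw_def]
      refine le_csInf (DTWAux.costs_nonempty hx hy) ?_
      intro C hC
      rw [hxr, hyr] at hC
      rcases (DTWAux.lower hcd ha1 hb1 hud hvc hC).2 hu0 with h | ⟨hvne, -⟩
      · rw [← hyr] at h
        exact h
      · exact absurd hv0 hvne
  · intro hy2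
    have hx2 : 1 < numRuns x := lt_of_lt_of_le hy2 hruns
    have hu0 : u ≠ [] := fun h => by have := hxu.2 h; omega
    have hv0 : v ≠ [] := fun h => by have := hyv.2 h; omega
    refine le_antisymm (le_min ?_ ?_) ?_
    · have hle := DTWAux.dtw_run_prepend hcd ha1 hu0 hy hd.symm
      calc dtw x y = dtw (List.replicate a c ++ u) y := by conv_lhs => rw [hxr]
        _ ≤ _ := hle
    · have hle := DTWAux.dtw_run_prepend (c := d) (d := c) (by rwa [abs_sub_comm]) hb1 hv0 hx hc.symm
      rw [← hyr, DTWAux.dtw_comm y x, DTWAux.dtw_comm v x] at hle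
      exact hle
    · rw [DTWAux.dtw_def]
      refine le_csInf (DTWAux.costs_nonempty hx hy) ?_
      intro C hC
      rw [hxr, hyr] at hC
      rcases (DTWAux.lower hcd ha1 hb1 hud hvc hC).2 hu0 with h | ⟨-, h⟩
      · rw [← hyr] at h
        exact le_trans (min_le_left _ _) h
      · rw [← hxr] at h
        exact le_trans (min_le_right _ _) h
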